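/- Fix k ≥ 2 and let ρ = −diag(e^{−πi/k},…,e^{−(k−1)πi/k}) ∈ GL_{k−1}(ℂ), Γ₀ = (1,…,1)ᵀ, Γ the lattice generated by {ρⁱΓ₀ : 0 ≤ i ≤ 2k−3}, and Π = (1−ρ)Γ. Then the set of fixed points of the map induced by ρ on the quotient group ℂ^{k−1}/Γ is in bijection with Γ/(1−ρ)Γ and has exactly k elements, represented by the vectors l·(1−ρ)⁻¹Γ₀ for l = 0,1,…,k−1. -/

import Mathlib

open Complex Finset

/-- Components of the diagonal matrix `ρ`, written as roots of unity. -/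
noncomputable def stmt17lam (k : ℕ) (j : Fin (k-1)) : ℂ :=
  Complex.exp ((Real.pi : ℂ) * Complex.I * ((k - 1 - (j : ℕ) : ℕ) : ℂ) / (k : ℂ))

lemma stmt17_exp_pow_frac (k : ℕ) (m t : ℕ) :
    Complex.exp ((Real.pi : ℂ) * Complex.I * (m : ℂ) / (k : ℂ)) ^ t
      = Complex.exp ((Real.pi : ℂ) * Complex.I * ((m * t : ℕ) : ℂ) / (k : ℂ)) := by
  rw [← Complex.exp_nat_mul]; congr 1; push_cast; ring

lemma stmt17_lam_eq (k : ℕ) (hk : 2 ≤ k) (j : Fin (k-1)) :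
    -Complex.exp (-(Real.pi : ℂ) * Complex.I * (((j : ℕ) : ℂ) + 1) / (k : ℂ))
      = stmt17lam k j := by
  have hk0 : (k : ℂ) ≠ 0 := by simp; omega
  have hj : (j : ℕ) + 1 ≤ k := by have := j.isLt; omega
  have hcast : ((k - 1 - (j : ℕ) : ℕ) : ℂ) = (k : ℂ) - ((j : ℕ) : ℂ) - 1 := by
    have : k - 1 - (j:ℕ) = k - ((j:ℕ) + 1) := by omega
    rw [this, Nat.cast_sub hj]; push_cast; ring
  rw [stmt17lam, hcast]
  rw [show -Complex.exp (-(Real.pi : ℂ) * Complex.I * (((j : ℕ) : ℂ) + 1) / (k : ℂ))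
      = Complex.exp ((Real.pi:ℂ) * Complex.I)
        * Complex.exp (-(Real.pi : ℂ) * Complex.I * (((j : ℕ) : ℂ) + 1) / (k : ℂ)) from by
    rw [Complex.exp_pi_mul_I]; ring]
  rw [← Complex.exp_add]
  congr 1
  field_simp
  ring

lemma stmt17_exp_frac_ne_one (k : ℕ) (hk : 2 ≤ k) (r : ℕ) (h1 : 0 < r) (h2 : r < 2 * k) :
    Complex.exp ((Real.pi : ℂ) * Complex.I * (r : ℂ) / (k : ℂ)) ≠ 1 := by
  intro h
  rw [Complex.exp_eq_one_iff] at h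
  obtain ⟨n, hn⟩ := h
  have hk0 : (k : ℂ) ≠ 0 := by simp; omega
  have hpi : (Real.pi : ℂ) ≠ 0 := by simpa using Real.pi_ne_zero
  have hI : Complex.I ≠ 0 := Complex.I_ne_zero
  field_simp at hn
  have h3 : (Real.pi : ℂ) * Complex.I * ((r : ℤ) : ℂ)
      = (Real.pi : ℂ) * Complex.I * ((2 * n * k : ℤ) : ℂ) := by
    push_cast
    linear_combination ((Real.pi : ℂ) * Complex.I) * hn
  have h4 : (r : ℤ) = 2 * n * k := by
    exact_mod_cast mul_left_cancel₀ (mul_ne_zero hpi hI) h3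
  have hkz : (0 : ℤ) < k := by exact_mod_cast (by omega : 0 < k)
  rcases le_or_gt n 0 with hn0 | hn0
  · nlinarith [h4, (by exact_mod_cast h1 : (0:ℤ) < (r:ℤ))]
  · nlinarith [h4, (by exact_mod_cast h2 : (r:ℤ) < 2 * k)]

lemma stmt17_exp_frac_pow_k (k : ℕ) (hk : 2 ≤ k) (s : ℕ) :
    Complex.exp ((Real.pi : ℂ) * Complex.I * (s : ℂ) / (k : ℂ)) ^ k = (-1 : ℂ) ^ s := by
  rw [stmt17_exp_pow_frac]
  have hk0 : (k : ℂ) ≠ 0 := by simp; omega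
  have : (Real.pi : ℂ) * Complex.I * ((s * k : ℕ) : ℂ) / (k : ℂ)
      = (s : ℕ) * ((Real.pi : ℂ) * Complex.I) := by
    push_cast; field_simp
  rw [this, Complex.exp_nat_mul, Complex.exp_pi_mul_I]

lemma stmt17_sum_lam_pow (k : ℕ) (hk : 2 ≤ k) (r : ℕ) (hr1 : 0 < r) (hr2 : r < 2 * k) :
    (∑ j : Fin (k-1), stmt17lam k j ^ r)
      = (∑ i ∈ Finset.range k,
          Complex.exp ((Real.pi : ℂ) * Complex.I * (r : ℂ) / (k : ℂ)) ^ i) - 1 := by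
  set ζ := Complex.exp ((Real.pi : ℂ) * Complex.I * (r : ℂ) / (k : ℂ)) with hζdef
  have hlam : ∀ j : Fin (k-1), stmt17lam k j ^ r = ζ ^ (k - 1 - (j : ℕ)) := by
    intro j
    rw [stmt17lam, stmt17_exp_pow_frac, hζdef, stmt17_exp_pow_frac, Nat.mul_comm]
  calc ∑ j : Fin (k-1), stmt17lam k j ^ r
      = ∑ j ∈ Finset.range (k-1), ζ ^ (k - 1 - j) := by
        rw [Finset.sum_congr rfl (fun j _ => hlam j)]
        exact Fin.sum_univ_eq_sum_range (fun j => ζ ^ (k - 1 - j)) (k-1)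
    _ = ∑ j ∈ Finset.range (k-1), ζ ^ (j + 1) := by
        rw [← Finset.sum_range_reflect (fun j => ζ ^ (j + 1)) (k-1)]
        refine Finset.sum_congr rfl fun j hj => ?_
        rw [Finset.mem_range] at hj
        congr 1
        omega
    _ = (∑ i ∈ Finset.range k, ζ ^ i) - 1 := by
        have : k = (k - 1) + 1 := by omega
        rw [this, Finset.sum_range_succ' (fun i => ζ ^ i) (k-1)]
        simp

lemma stmt17_T_pair (k : ℕ) (hk : 2 ≤ k) (s : ℕ) (h1 : 0 < s) (h2 : s < 2 * k) :
    (∑ j : Fin (k-1), stmt17lam k j ^ s) + (∑ j : Fin (k-1), stmt17lam k j ^ (2*k - s))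
      = -1 - (-1) ^ s := by
  have hk0 : (k : ℂ) ≠ 0 := by simp; omega
  set ζ := Complex.exp ((Real.pi : ℂ) * Complex.I * (s : ℂ) / (k : ℂ)) with hζdef
  set ζ' := Complex.exp ((Real.pi : ℂ) * Complex.I * ((2*k - s : ℕ) : ℂ) / (k : ℂ)) with hζ'def
  have hζ1 : ζ ≠ 1 := stmt17_exp_frac_ne_one k hk s h1 h2
  have hζ'1 : ζ' ≠ 1 := stmt17_exp_frac_ne_one k hk (2*k - s) (by omega) (by omega)
  have hmul : ζ * ζ' = 1 := by
    rw [hζdef, hζ'def, ← Complex.exp_add]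
    have : (Real.pi : ℂ) * Complex.I * (s : ℂ) / (k : ℂ)
        + (Real.pi : ℂ) * Complex.I * ((2*k - s : ℕ) : ℂ) / (k : ℂ)
        = 2 * (Real.pi : ℂ) * Complex.I := by
      have hcast : ((2*k - s : ℕ) : ℂ) = 2 * (k : ℂ) - (s : ℂ) := by
        push_cast [Nat.cast_sub (by omega : s ≤ 2*k)]; ring
      rw [hcast]
      field_simp
      ring
    rw [this, Complex.exp_two_pi_mul_I]
  have hζk : ζ ^ k = (-1 : ℂ) ^ s := stmt17_exp_frac_pow_k k hk s
  have hζ'k : ζ' ^ k = (-1 : ℂ) ^ s := by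
    rw [hζ'def, stmt17_exp_frac_pow_k k hk]
    have e1 : (-1 : ℂ) ^ (2*k - s) * (-1 : ℂ) ^ s = 1 := by
      rw [← pow_add, show 2*k - s + s = 2*k from by omega, pow_mul, neg_one_sq, one_pow]
    have e2 : (-1 : ℂ) ^ s * (-1 : ℂ) ^ s = 1 := by
      rw [← pow_add, ← two_mul, pow_mul, neg_one_sq, one_pow]
    have hne : (-1 : ℂ) ^ s ≠ 0 := pow_ne_zero _ (by norm_num)
    exact mul_right_cancel₀ hne (e1.trans e2.symm)
  rw [stmt17_sum_lam_pow k hk s h1 h2, stmt17_sum_lam_pow k hk (2*k-s) (by omega) (by omega)]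
  rw [geom_sum_eq hζ1, geom_sum_eq hζ'1, hζk, hζ'k]
  have hd1 : ζ - 1 ≠ 0 := sub_ne_zero.mpr hζ1
  have hd2 : ζ' - 1 ≠ 0 := sub_ne_zero.mpr hζ'1
  set u : ℂ := (-1 : ℂ) ^ s with hu
  have h5 : (u - 1)/(ζ - 1) + (u - 1)/(ζ' - 1) = 1 - u := by
    field_simp
    linear_combination (u - 1) * hmul
  linear_combination h5

lemma stmt17_lam_pow_two_k (k : ℕ) (hk : 2 ≤ k) (j : Fin (k-1)) :
    stmt17lam k j ^ (2*k) = 1 := by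
  have hk0 : (k : ℂ) ≠ 0 := by simp; omega
  rw [stmt17lam, stmt17_exp_pow_frac]
  rw [show (Real.pi : ℂ) * Complex.I * (((k-1-(j:ℕ)) * (2*k) : ℕ) : ℂ) / (k : ℂ)
      = ((k-1-(j:ℕ) : ℕ) : ℂ) * (2 * (Real.pi : ℂ) * Complex.I) from by
    push_cast; field_simp]
  exact Complex.exp_nat_mul_two_pi_mul_I _

lemma stmt17_lam_ne_zero (k : ℕ) (j : Fin (k-1)) : stmt17lam k j ≠ 0 := Complex.exp_ne_zero _

lemma stmt17_lam_ne_one (k : ℕ) (hk : 2 ≤ k) (j : Fin (k-1)) : stmt17lam k j ≠ 1 := by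
  have := j.isLt
  exact stmt17_exp_frac_ne_one k hk (k - 1 - (j:ℕ)) (by omega) (by omega)

lemma stmt17_lam_sq_ne_one (k : ℕ) (hk : 2 ≤ k) (j : Fin (k-1)) : stmt17lam k j ^ 2 ≠ 1 := by
  have := j.isLt
  rw [stmt17lam, stmt17_exp_pow_frac]
  exact stmt17_exp_frac_ne_one k hk ((k - 1 - (j:ℕ)) * 2) (by omega) (by omega)

lemma stmt17_lam_conj (k : ℕ) (hk : 2 ≤ k) (j : Fin (k-1)) (s : ℕ) (hs : s ≤ 2*k) :
    (starRingEnd ℂ) (stmt17lam k j ^ s) = stmt17lam k j ^ (2*k - s) := by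
  have h1 : (starRingEnd ℂ) (stmt17lam k j) * stmt17lam k j = 1 := by
    rw [stmt17lam, ← Complex.exp_conj, ← Complex.exp_add]
    rw [show (starRingEnd ℂ) ((Real.pi : ℂ) * Complex.I * ((k - 1 - (j : ℕ) : ℕ) : ℂ) / (k : ℂ))
        = -((Real.pi : ℂ) * Complex.I * ((k - 1 - (j : ℕ) : ℕ) : ℂ) / (k : ℂ)) from by
      simp [map_div₀, Complex.conj_I]
      ring]
    simp
  have h2 : (starRingEnd ℂ) (stmt17lam k j ^ s) * stmt17lam k j ^ s = 1 := by
    rw [map_pow, ← mul_pow, h1, one_pow]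
  have h3 : stmt17lam k j ^ (2*k - s) * stmt17lam k j ^ s = 1 := by
    rw [← pow_add, show 2*k - s + s = 2*k from by omega, stmt17_lam_pow_two_k k hk]
  exact mul_right_cancel₀ (pow_ne_zero s (stmt17_lam_ne_zero k j)) (h2.trans h3.symm)

lemma stmt17_sum_lam_two_k (k : ℕ) (hk : 2 ≤ k) :
    (∑ j : Fin (k-1), stmt17lam k j ^ (2*k)) = ((k : ℂ) - 1) := by
  rw [Finset.sum_congr rfl (fun j _ => stmt17_lam_pow_two_k k hk j)]
  simp
  rw [Nat.cast_sub (by omega)]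
  simp

lemma stmt17_aux_geom (y : ℂ) (m : ℕ) :
    (1 - y) * ∑ t ∈ Finset.range m, ((m - t : ℕ) : ℂ) * y ^ t
      = (m : ℂ) - y * ∑ t ∈ Finset.range m, y ^ t := by
  induction m with
  | zero => simp
  | succ m ih =>
    have h1 : ∑ t ∈ Finset.range (m+1), ((m + 1 - t : ℕ) : ℂ) * y ^ t
        = (∑ t ∈ Finset.range m, ((m - t : ℕ) : ℂ) * y ^ t)
          + ∑ t ∈ Finset.range (m+1), y ^ t := by
      rw [Finset.sum_range_succ, Finset.sum_range_succ (f := fun t => y ^ t)]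
      have h2 : ∀ t ∈ Finset.range m, ((m + 1 - t : ℕ) : ℂ) * y ^ t
          = ((m - t : ℕ) : ℂ) * y ^ t + y ^ t := by
        intro t ht
        rw [Finset.mem_range] at ht
        have : ((m + 1 - t : ℕ) : ℂ) = ((m - t : ℕ) : ℂ) + 1 := by
          have : m + 1 - t = (m - t) + 1 := by omega
          rw [this]; push_cast; ring
        rw [this]; ring
      rw [Finset.sum_congr rfl h2, Finset.sum_add_distrib]
      simp; ring
    have h3 : (1 - y) * (∑ t ∈ Finset.range (m+1), y ^ t) = 1 - y ^ (m+1) := by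
      have h := geom_sum_mul y (m+1)
      linear_combination -h
    rw [h1, mul_add, ih, h3, Finset.sum_range_succ (f := fun t => y ^ t)]
    push_cast
    ring

/-- The auxiliary additive (ℤ-linear) functional used to separate lattice classes. -/
noncomputable def stmt17phi (n : ℕ) (A B : Fin n → ℂ) : (Fin n → ℂ) →+ ℂ :=
  AddMonoidHom.mk' (fun z => ∑ j, (A j * z j + B j * (starRingEnd ℂ) (z j))) (by
    intro x y
    rw [← Finset.sum_add_distrib]
    refine Finset.sum_congr rfl fun j _ => ?_
    simp [map_add]
    ring)

lemma stmt17phi_apply (n : ℕ) (A B : Fin n → ℂ) (z : Fin n → ℂ) :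
    stmt17phi n A B z = ∑ j, (A j * z j + B j * (starRingEnd ℂ) (z j)) := rfl

set_option maxHeartbeats 1000000

/-- Fixed points of `ρ` on `ℂ^{k-1}/Γ`: every vector `l·(1-ρ)⁻¹Γ₀`
(`l = 0,…,k-1`) is a fixed point of the map induced by `ρ` on `ℂ^{k-1}/Γ`,
and every fixed point is congruent mod `Γ` to exactly one of these `k`
vectors. -/
theorem stmt_17 (k : ℕ) (hk : 2 ≤ k)
    (ρ : Matrix (Fin (k-1)) (Fin (k-1)) ℂ)
    (hρ : ρ = Matrix.diagonal (fun j : Fin (k-1) =>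
      -Complex.exp (-(Real.pi : ℂ) * Complex.I * (((j : ℕ) : ℂ) + 1) / (k : ℂ))))
    (Γ₀ : Fin (k-1) → ℂ) (hΓ₀ : Γ₀ = fun _ => 1)
    (ΓL : Submodule ℤ (Fin (k-1) → ℂ))
    (hΓL : ΓL = Submodule.span ℤ
      (Set.range fun i : Fin (2*k-2) => (ρ ^ (i : ℕ)).mulVec Γ₀)) :
    (∀ l : Fin k,
      ρ.mulVec ((((l : ℕ) : ℂ)) • (1 - ρ)⁻¹.mulVec Γ₀) -
        (((l : ℕ) : ℂ)) • (1 - ρ)⁻¹.mulVec Γ₀ ∈ ΓL) ∧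
    (∀ z : Fin (k-1) → ℂ, ρ.mulVec z - z ∈ ΓL →
      ∃! l : Fin k, z - (((l : ℕ) : ℂ)) • (1 - ρ)⁻¹.mulVec Γ₀ ∈ ΓL) := by
  subst hΓ₀
  have hρ' : ρ = Matrix.diagonal (stmt17lam k) := by
    rw [hρ]; exact congrArg Matrix.diagonal (funext fun j => stmt17_lam_eq k hk j)
  have hne1 : ∀ j, stmt17lam k j ≠ 1 := stmt17_lam_ne_one k hk
  have hsub : ∀ j : Fin (k-1), (1:ℂ) - stmt17lam k j ≠ 0 :=
    fun j => sub_ne_zero.mpr (Ne.symm (hne1 j))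
  set u : ℕ → Fin (k-1) → ℂ := fun t j => stmt17lam k j ^ t with hu
  set w : Fin (k-1) → ℂ := fun j => (1 - stmt17lam k j)⁻¹ with hw
  have hw1 : ∀ j, (1 - stmt17lam k j) * w j = 1 := fun j => mul_inv_cancel₀ (hsub j)
  have hV : ∀ i : Fin (2*k-2), (ρ ^ (i:ℕ)).mulVec (fun _ => (1:ℂ)) = u (i:ℕ) := by
    intro i; funext j
    rw [hρ']
    simp [Matrix.diagonal_pow, Matrix.mulVec_diagonal, hu]
  have hS : ΓL = Submodule.span ℤ (Set.range fun i : Fin (2*k-2) => u (i:ℕ)) := by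
    rw [hΓL]; congr 1; exact congrArg Set.range (funext hV)
  have hmem_u : ∀ t : ℕ, t < 2*k-2 → u t ∈ ΓL := by
    intro t ht
    rw [hS]
    exact Submodule.subset_span ⟨⟨t, ht⟩, rfl⟩
  have hinv : (1 - ρ)⁻¹.mulVec (fun _ => (1:ℂ)) = w := by
    have hd : (1 - ρ) = Matrix.diagonal (fun j => 1 - stmt17lam k j) := by
      rw [hρ', ← Matrix.diagonal_one, Matrix.diagonal_sub]
    have hright : (1 - ρ) * Matrix.diagonal w = 1 := by
      rw [hd, Matrix.diagonal_mul_diagonal]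
      rw [show (fun i => (1 - stmt17lam k i) * w i) = fun _ : Fin (k-1) => (1:ℂ) from funext hw1]
      exact Matrix.diagonal_one
    rw [Matrix.inv_eq_right_inv hright]
    funext j
    simp [Matrix.mulVec_diagonal]
  constructor
  · -- Part 1
    intro l
    rw [hinv]
    have e : Matrix.mulVec ρ (((l:ℕ):ℂ) • w) - ((l:ℕ):ℂ) • w = (-((l:ℕ):ℤ)) • u 0 := by
      funext j
      rw [hρ']
      simp only [Pi.sub_apply, Pi.smul_apply, smul_eq_mul, Matrix.mulVec_diagonal,
        Pi.intCast_apply]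
      rw [hu, hw]
      simp only [pow_zero, zsmul_eq_mul]
      push_cast
      field_simp [hsub j]
      ring
    rw [e]
    exact Submodule.smul_mem _ _ (hmem_u 0 (by omega))
  · -- Part 2
    intro z hz
    simp only [hinv]
    set γ : Fin (k-1) → ℂ := fun j => stmt17lam k j * z j - z j with hγ
    have hzγ : Matrix.mulVec ρ z - z = γ := by
      funext j
      rw [hρ']
      simp [Matrix.mulVec_diagonal, hγ]
    rw [hzγ] at hz
    -- representation of γ
    rw [hS] at hz
    obtain ⟨c, hc⟩ := (Submodule.mem_span_range_iff_exists_fun ℤ).mp hz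
    have hcj : ∀ j, (∑ i : Fin (2*k-2), (c i : ℂ) * stmt17lam k j ^ (i:ℕ)) = γ j := by
      intro j
      have h := congrFun hc j
      simpa [Finset.sum_apply, hu, zsmul_eq_mul] using h
    set N : ℤ := ∑ i : Fin (2*k-2), c i with hN
    -- Step A : z + N•w ∈ ΓL
    have stepA : z + ((N : ℤ) : ℂ) • w ∈ ΓL := by
      have repA : z + ((N : ℤ) : ℂ) • w
          = ∑ i : Fin (2*k-2), c i • (∑ t ∈ Finset.range (i:ℕ), u t) := by
        funext j
        have happ : (∑ i : Fin (2*k-2), c i • (∑ t ∈ Finset.range (i:ℕ), u t)) j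
            = ∑ i : Fin (2*k-2), (c i : ℂ) * (∑ t ∈ Finset.range (i:ℕ), stmt17lam k j ^ t) := by
          simp [Finset.sum_apply, hu, zsmul_eq_mul, Finset.mul_sum]
        rw [Pi.add_apply, Pi.smul_apply, smul_eq_mul, happ]
        apply mul_left_cancel₀ (hsub j)
        rw [Finset.mul_sum]
        have hterm : ∀ i : Fin (2*k-2),
            (1 - stmt17lam k j) * ((c i : ℂ) * (∑ t ∈ Finset.range (i:ℕ), stmt17lam k j ^ t))
              = (c i : ℂ) * (1 - stmt17lam k j ^ (i:ℕ)) := by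
          intro i
          linear_combination (-(c i : ℂ)) * geom_sum_mul (stmt17lam k j) (i:ℕ)
        rw [Finset.sum_congr rfl fun i _ => hterm i]
        have hsplit : (∑ i : Fin (2*k-2), (c i:ℂ) * (1 - stmt17lam k j ^ (i:ℕ)))
            = ((N:ℤ):ℂ) - γ j := by
          have h1 : ((N:ℤ):ℂ) = ∑ i : Fin (2*k-2), (c i : ℂ) := by
            rw [hN]; push_cast; rfl
          rw [h1, ← hcj j, ← Finset.sum_sub_distrib]
          exact Finset.sum_congr rfl fun i _ => by ring
        rw [hsplit]
        have hzj : (1 - stmt17lam k j) * z j = -γ j := by rw [hγ]; ring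
        linear_combination hzj + ((N:ℤ):ℂ) * hw1 j
      rw [repA]
      refine Submodule.sum_mem _ fun i _ =>
        Submodule.smul_mem _ _ (Submodule.sum_mem _ fun t ht => hmem_u t ?_)
      have h1 := Finset.mem_range.mp ht
      have h2 := i.isLt
      omega
    -- Step B : multiples of k times w lie in ΓL
    have hkw : ((k:ℕ):ℂ) • w
        = ∑ t ∈ Finset.range (k-1), ((k - 1 - t : ℕ) : ℤ) • (u (2*t) + u (2*t+1)) := by
      funext j
      have hL2 : stmt17lam k j ^ 2 ≠ 1 := stmt17_lam_sq_ne_one k hk j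
      have hLk : (stmt17lam k j ^ 2) ^ k = 1 := by
        rw [← pow_mul]; exact stmt17_lam_pow_two_k k hk j
      have happ : (∑ t ∈ Finset.range (k-1), ((k-1-t : ℕ):ℤ) • (u (2*t) + u (2*t+1))) j
          = ∑ t ∈ Finset.range (k-1), ((k-1-t : ℕ):ℂ)
              * ((stmt17lam k j ^ 2) ^ t + (stmt17lam k j ^ 2) ^ t * stmt17lam k j) := by
        rw [Finset.sum_apply]
        refine Finset.sum_congr rfl fun t _ => ?_
        have e1 : stmt17lam k j ^ (2*t) = (stmt17lam k j ^ 2) ^ t := by rw [← pow_mul]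
        have e2 : stmt17lam k j ^ (2*t+1) = (stmt17lam k j ^ 2) ^ t * stmt17lam k j := by
          rw [pow_succ, ← pow_mul]
        simp [hu, zsmul_eq_mul, e1, e2]
        ring
      rw [Pi.smul_apply, smul_eq_mul, happ]
      apply mul_left_cancel₀ (hsub j)
      have hRHS : (1 - stmt17lam k j) * (∑ t ∈ Finset.range (k-1), ((k-1-t : ℕ):ℂ)
              * ((stmt17lam k j ^ 2) ^ t + (stmt17lam k j ^ 2) ^ t * stmt17lam k j))
          = (k : ℂ) := by
        have step1 : (1 - stmt17lam k j) * (∑ t ∈ Finset.range (k-1), ((k-1-t : ℕ):ℂ)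
              * ((stmt17lam k j ^ 2) ^ t + (stmt17lam k j ^ 2) ^ t * stmt17lam k j))
            = (1 - stmt17lam k j ^ 2) * ∑ t ∈ Finset.range (k-1),
                ((k-1-t : ℕ):ℂ) * (stmt17lam k j ^ 2) ^ t := by
          rw [Finset.mul_sum, Finset.mul_sum]
          exact Finset.sum_congr rfl fun t _ => by ring
        rw [step1, stmt17_aux_geom (stmt17lam k j ^ 2) (k-1)]
        have hGk : (∑ t ∈ Finset.range k, (stmt17lam k j ^ 2) ^ t) = 0 := by
          rw [geom_sum_eq hL2, hLk]; simp
        have h7 : ∑ t ∈ Finset.range ((k-1)+1), (stmt17lam k j ^ 2) ^ t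
            = stmt17lam k j ^ 2 * ∑ t ∈ Finset.range (k-1), (stmt17lam k j ^ 2) ^ t + 1 :=
          geom_sum_succ
        rw [show (k-1)+1 = k from by omega, hGk] at h7
        have hcast : ((k-1 : ℕ) : ℂ) = (k:ℂ) - 1 := by
          rw [Nat.cast_sub (by omega)]; simp
        rw [hcast]
        linear_combination h7
      rw [hRHS]
      linear_combination (k:ℂ) * hw1 j
    have stepB : ∀ M : ℤ, ((k:ℕ):ℤ) ∣ M → ((M:ℤ):ℂ) • w ∈ ΓL := by
      rintro M ⟨q, hq⟩
      have e : ((M:ℤ):ℂ) • w = q • (((k:ℕ):ℂ) • w) := by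
        subst hq; funext j
        simp only [Pi.smul_apply, smul_eq_mul, zsmul_eq_mul]
        push_cast
        ring
      rw [e, hkw]
      refine Submodule.smul_mem _ _ (Submodule.sum_mem _ fun t ht =>
        Submodule.smul_mem _ _ (Submodule.add_mem _ (hmem_u _ ?_) (hmem_u _ ?_)))
      · have := Finset.mem_range.mp ht; omega
      · have := Finset.mem_range.mp ht; omega
    -- the functional Φ
    set A : Fin (k-1) → ℂ := fun j => stmt17lam k j ^ 3 - stmt17lam k j with hA
    set B : Fin (k-1) → ℂ :=
      fun j => stmt17lam k j ^ (2*k-3) - stmt17lam k j ^ (2*k-1) with hB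
    set Φ : (Fin (k-1) → ℂ) →+ ℂ := stmt17phi (k-1) A B with hΦ
    have hexp : ∀ t : ℕ, t ≤ 2*k-3 → Φ (u t)
        = ((∑ j : Fin (k-1), stmt17lam k j ^ (t+3))
            + (∑ j : Fin (k-1), stmt17lam k j ^ (2*k - (t+3))))
          - ((∑ j : Fin (k-1), stmt17lam k j ^ (t+1))
            + (∑ j : Fin (k-1), stmt17lam k j ^ (2*k - (t+1)))) := by
      intro t ht
      rw [hΦ, stmt17phi_apply]
      have hterm : ∀ j : Fin (k-1), A j * u t j + B j * (starRingEnd ℂ) (u t j)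
          = (stmt17lam k j ^ (t+3) - stmt17lam k j ^ (t+1))
            + (stmt17lam k j ^ (2*k - (t+3)) - stmt17lam k j ^ (2*k - (t+1))) := by
        intro j
        have hconj : (starRingEnd ℂ) (stmt17lam k j ^ t) = stmt17lam k j ^ (2*k - t) :=
          stmt17_lam_conj k hk j t (by omega)
        have e1 : stmt17lam k j ^ (2*k-3) * stmt17lam k j ^ (2*k-t)
            = stmt17lam k j ^ (2*k - (t+3)) := by
          rw [← pow_add, show 2*k-3 + (2*k-t) = (2*k - (t+3)) + 2*k from by omega,
            pow_add, stmt17_lam_pow_two_k k hk j, mul_one]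
        have e2 : stmt17lam k j ^ (2*k-1) * stmt17lam k j ^ (2*k-t)
            = stmt17lam k j ^ (2*k - (t+1)) := by
          rw [← pow_add, show 2*k-1 + (2*k-t) = (2*k - (t+1)) + 2*k from by omega,
            pow_add, stmt17_lam_pow_two_k k hk j, mul_one]
        simp only [hu, hA, hB, hconj]
        linear_combination e1 - e2
      rw [Finset.sum_congr rfl fun j _ => hterm j]
      rw [Finset.sum_add_distrib, Finset.sum_sub_distrib, Finset.sum_sub_distrib]
      ring
    have hΦu0 : ∀ t : ℕ, t ≤ 2*k-4 → Φ (u t) = 0 := by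
      intro t ht
      rw [hexp t (by omega)]
      have p1 := stmt17_T_pair k hk (t+3) (by omega) (by omega)
      have p2 := stmt17_T_pair k hk (t+1) (by omega) (by omega)
      linear_combination p1 - p2
    have hΦlast : Φ (u (2*k-3)) = 2*(k:ℂ) := by
      rw [hexp (2*k-3) (le_refl _)]
      rw [show 2*k-3+3 = 2*k from by omega, show 2*k - (2*k) = 0 from by omega,
        show 2*k-3+1 = 2*k-2 from by omega, show 2*k - (2*k-2) = 2 from by omega]
      have hT2k := stmt17_sum_lam_two_k k hk
      have hT0 : (∑ _j : Fin (k-1), (stmt17lam k _j) ^ 0) = (k:ℂ) - 1 := by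
        simp
        rw [Nat.cast_sub (by omega)]; simp
      have p := stmt17_T_pair k hk 2 (by omega) (by omega)
      linear_combination hT2k + hT0 - p
    have hΦw : Φ w = 2 := by
      rw [hΦ, stmt17phi_apply]
      have hterm : ∀ j : Fin (k-1), A j * w j + B j * (starRingEnd ℂ) (w j)
          = (-(stmt17lam k j ^ 2 + stmt17lam k j ^ 1))
            + (-(stmt17lam k j ^ (2*k-2) + stmt17lam k j ^ (2*k-1))) := by
        intro j
        have h1 : A j * w j = -(stmt17lam k j ^ 2 + stmt17lam k j ^ 1) := by
          rw [hA, hw]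
          field_simp [hsub j]
          ring
        have h2 : B j * (starRingEnd ℂ) (w j)
            = -(stmt17lam k j ^ (2*k-2) + stmt17lam k j ^ (2*k-1)) := by
          have hBconj : B j = (starRingEnd ℂ) (A j) := by
            rw [hA, hB, map_sub, stmt17_lam_conj k hk j 3 (by omega)]
            have h3 := stmt17_lam_conj k hk j 1 (by omega)
            rw [pow_one] at h3
            rw [h3]
          rw [hBconj, ← map_mul, h1, map_neg, map_add,
            stmt17_lam_conj k hk j 2 (by omega), stmt17_lam_conj k hk j 1 (by omega)]
        rw [h1, h2]
      rw [Finset.sum_congr rfl fun j _ => hterm j]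
      rw [Finset.sum_add_distrib]
      have p2 := stmt17_T_pair k hk 2 (by omega) (by omega)
      have p1 := stmt17_T_pair k hk 1 (by omega) (by omega)
      rw [show 2*k - 1 = 2*k-1 from rfl] at p1
      simp only [Finset.sum_neg_distrib, Finset.sum_add_distrib]
      linear_combination -p1 - p2
    have hΦsmul : ∀ (a : ℤ) (x : Fin (k-1) → ℂ), Φ (((a:ℤ):ℂ) • x) = ((a:ℤ):ℂ) * Φ x := by
      intro a x
      rw [hΦ, stmt17phi_apply, stmt17phi_apply, Finset.mul_sum]
      refine Finset.sum_congr rfl fun j _ => ?_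
      simp only [Pi.smul_apply, smul_eq_mul, map_mul, map_intCast]
      ring
    -- uniqueness
    have key_unique : ∀ l1 l2 : Fin k,
        z - (((l1:ℕ):ℕ):ℂ) • w ∈ ΓL → z - (((l2:ℕ):ℕ):ℂ) • w ∈ ΓL → l1 = l2 := by
      intro l1 l2 h1 h2
      have hdiff : (((((l1:ℕ):ℤ) - ((l2:ℕ):ℤ)) : ℤ) : ℂ) • w ∈ ΓL := by
        have e : (((((l1:ℕ):ℤ) - ((l2:ℕ):ℤ)) : ℤ) : ℂ) • w
            = (z - (((l2:ℕ)):ℂ) • w) - (z - (((l1:ℕ)):ℂ) • w) := by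
          funext j
          simp only [Pi.smul_apply, Pi.sub_apply, smul_eq_mul]
          push_cast
          ring
        rw [e]
        exact Submodule.sub_mem _ h2 h1
      rw [hS] at hdiff
      obtain ⟨c', hc'⟩ := (Submodule.mem_span_range_iff_exists_fun ℤ).mp hdiff
      have happly := congrArg Φ hc'
      rw [map_sum] at happly
      have h8 : ∀ i : Fin (2*k-2), Φ (c' i • u (i:ℕ)) = (c' i : ℂ) * Φ (u (i:ℕ)) := by
        intro i; rw [map_zsmul, zsmul_eq_mul]
      rw [Finset.sum_congr rfl fun i _ => h8 i, hΦsmul _ w, hΦw] at happly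
      set i0 : Fin (2*k-2) := ⟨2*k-3, by omega⟩ with hi0
      have hv0 : ((i0:ℕ)) = 2*k-3 := by rw [hi0]
      have hother : ∀ i : Fin (2*k-2), i ∈ Finset.univ → i ≠ i0 →
          (c' i:ℂ) * Φ (u (i:ℕ)) = 0 := by
        intro i _ hne
        have hvne : (i:ℕ) ≠ 2*k-3 := fun h => hne (Fin.ext (h.trans hv0.symm))
        have hle : (i:ℕ) ≤ 2*k-4 := by
          have := i.isLt
          omega
        rw [hΦu0 _ hle, mul_zero]
      have h9 : (∑ i : Fin (2*k-2), (c' i:ℂ) * Φ (u (i:ℕ))) = (c' i0 : ℂ) * (2*(k:ℂ)) := by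
        rw [Finset.sum_eq_single i0 hother (fun h => absurd (Finset.mem_univ i0) h), hv0, hΦlast]
      rw [h9] at happly
      push_cast at happly
      have h11 : ((l1:ℕ):ℤ) - ((l2:ℕ):ℤ) = c' i0 * (k:ℤ) := by
        have h10 : ((((l1:ℕ):ℤ) - ((l2:ℕ):ℤ) : ℤ):ℂ) = ((c' i0 * (k:ℤ) : ℤ) : ℂ) := by
          push_cast
          linear_combination (-1/2 : ℂ) * happly
        exact_mod_cast h10
      have hb1 : ((l1:ℕ):ℤ) < k := by exact_mod_cast l1.isLt
      have hb2 : ((l2:ℕ):ℤ) < k := by exact_mod_cast l2.isLt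
      have hb3 : (0:ℤ) ≤ ((l1:ℕ):ℤ) := Int.natCast_nonneg _
      have hb4 : (0:ℤ) ≤ ((l2:ℕ):ℤ) := Int.natCast_nonneg _
      have hkpos : (0:ℤ) < (k:ℤ) := by exact_mod_cast (by omega : 0 < k)
      have hc0 : c' i0 = 0 := by
        rcases lt_trichotomy (c' i0) 0 with h|h|h
        · nlinarith
        · exact h
        · nlinarith
      rw [hc0] at h11
      simp at h11
      exact Fin.ext (by omega)
    -- the representative
    have hkz : ((k:ℕ):ℤ) ≠ 0 := by exact_mod_cast (by omega : k ≠ 0)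
    have hl_lt : ((-N) % (k:ℤ)).toNat < k := by
      have h1 : (-N) % (k:ℤ) < (k:ℤ) := Int.emod_lt_of_pos _ (by exact_mod_cast (by omega : 0 < k))
      have h2 : 0 ≤ (-N) % (k:ℤ) := Int.emod_nonneg _ hkz
      omega
    set l : Fin k := ⟨((-N) % (k:ℤ)).toNat, hl_lt⟩ with hldef
    have hlcast : ((l:ℕ):ℤ) = (-N) % (k:ℤ) := Int.toNat_of_nonneg (Int.emod_nonneg _ hkz)
    have hdvd : ((k:ℕ):ℤ) ∣ (N + ((l:ℕ):ℤ)) := by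
      rw [hlcast, Int.emod_def]
      exact ⟨-((-N)/(k:ℤ)), by ring⟩
    have hl_mem : z - (((l:ℕ)):ℂ) • w ∈ ΓL := by
      have e : z - (((l:ℕ)):ℂ) • w
          = (z + ((N:ℤ):ℂ) • w) - (((N + ((l:ℕ):ℤ) : ℤ):ℂ)) • w := by
        funext j
        simp only [Pi.smul_apply, Pi.sub_apply, Pi.add_apply, smul_eq_mul]
        push_cast
        ring
      rw [e]
      exact Submodule.sub_mem _ stepA (stepB _ hdvd)
    exact ⟨l, hl_mem, fun y hy => key_unique y l hy hl_mem⟩
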